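/- arXiv:2310.19598 — 2 statements merged into one kernel-verified Lean document; each statement's English description precedes it below -/
import Mathlib

section
/- Suppose a continuous function X solves Ẍ(t) + (2/t)Ẋ(t) + (2/t^{3/2})∇f(X(t)) = 0 with f convex, C¹, minimizer x*, and the integral ∫_{t₀}^{∞} √t (f(X(t)) − f*) dt is finite. Then liminf_{t→∞} t^{3/2} log t · (f(X(t)) − f*) = 0; in particular there exists a sequence t_l → ∞ with f(X(t_l)) − f* = o(1/(t_l^{3/2} log t_l)). -/
open Real MeasureTheory Filter

lemma not_integrable_one_div_mul_log (T : ℝ) (hT : 2 ≤ T) :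
    ¬ IntegrableOn (fun t => 1 / (t * Real.log t)) (Set.Ioi T) := by
  intro H
  have hT0 : (0:ℝ) < T := by linarith
  have hT1 : (1:ℝ) < T := by linarith
  have hnonneg : 0 ≤ᵐ[volume.restrict (Set.Ioi T)]
      (fun t => 1 / (t * Real.log t)) := by
    rw [Filter.EventuallyLE, ae_restrict_iff' measurableSet_Ioi]
    filter_upwards with t ht
    have ht1 : (1:ℝ) < t := lt_trans hT1 ht
    have : 0 < Real.log t := Real.log_pos ht1
    positivity
  set C := ∫ t in Set.Ioi T, 1 / (t * Real.log t) with hC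
  have key : ∀ y, T ≤ y →
      Real.log (Real.log y) - Real.log (Real.log T) ≤ C := by
    intro y hy
    have hderiv : ∀ x ∈ Set.uIcc T y,
        HasDerivAt (fun s => Real.log (Real.log s)) (1 / (x * Real.log x)) x := by
      intro x hx
      rw [Set.uIcc_of_le hy] at hx
      have hx1 : (1:ℝ) < x := lt_of_lt_of_le hT1 hx.1
      have hx0 : x ≠ 0 := by linarith
      have hlx : Real.log x ≠ 0 := ne_of_gt (Real.log_pos hx1)
      have h1 : HasDerivAt Real.log x⁻¹ x := Real.hasDerivAt_log hx0
      have h2 : HasDerivAt Real.log (Real.log x)⁻¹ (Real.log x) :=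
        Real.hasDerivAt_log hlx
      have := h2.comp x h1
      convert this using 1
      · rfl
      · rfl
      · rfl
      rw [one_div, mul_inv]
      ring
    have hcont : ContinuousOn (fun t => 1 / (t * Real.log t)) (Set.uIcc T y) := by
      rw [Set.uIcc_of_le hy]
      apply ContinuousOn.div continuousOn_const
      · exact continuousOn_id.mul (Real.continuousOn_log.mono (fun x hx => by
          have : (1:ℝ) < x := lt_of_lt_of_le hT1 hx.1
          simp; linarith))
      · intro x hx
        have hx1 : (1:ℝ) < x := lt_of_lt_of_le hT1 hx.1
        have : 0 < Real.log x := Real.log_pos hx1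
        positivity
    have heq : ∫ t in T..y, 1 / (t * Real.log t)
        = Real.log (Real.log y) - Real.log (Real.log T) :=
      intervalIntegral.integral_eq_sub_of_hasDerivAt hderiv
        (hcont.intervalIntegrable)
    rw [← heq, intervalIntegral.integral_of_le hy]
    exact setIntegral_mono_set H hnonneg
      ((Set.Ioc_subset_Ioi_self).eventuallyLE)
  have htend : Tendsto (fun y => Real.log (Real.log y)) atTop atTop :=
    Real.tendsto_log_atTop.comp Real.tendsto_log_atTop
  obtain ⟨y, hy1, hy2⟩ := ((htend.eventually_gt_atTop
    (C + Real.log (Real.log T))).and (eventually_ge_atTop T)).exists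
  linarith [key y hy2]

/-- If along a solution of the SGDM limiting ODE the integral
`∫_{t₀}^∞ √t (f(X t) - f*) dt` is finite, then
`liminf_{t→∞} t^{3/2} (log t) (f(X t) - f*) = 0`; in particular there is a
sequence `t_l → ∞` with `f(X(t_l)) - f* = o(1/(t_l^{3/2} log t_l))`. -/
theorem sgdm_ode_liminf
    {n : ℕ} (f : EuclideanSpace ℝ (Fin n) → ℝ)
    (hfconv : ConvexOn ℝ Set.univ f) (hf : ContDiff ℝ 1 f)
    (xstar : EuclideanSpace ℝ (Fin n)) (hmin : ∀ y, f xstar ≤ f y)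
    (t₀ : ℝ) (ht₀ : 0 < t₀)
    (X X' X'' : ℝ → EuclideanSpace ℝ (Fin n))
    (hXcont : ContinuousOn X (Set.Ioi t₀))
    (hX : ∀ t > t₀, HasDerivAt X (X' t) t)
    (hX' : ∀ t > t₀, HasDerivAt X' (X'' t) t)
    (hODE : ∀ t > t₀,
      X'' t + (2 / t) • X' t + (2 / t ^ ((3:ℝ)/2)) • gradient f (X t) = 0)
    (hint : IntegrableOn (fun t => Real.sqrt t * (f (X t) - f xstar)) (Set.Ioi t₀)) :
    liminf (fun t : ℝ => t ^ ((3:ℝ)/2) * Real.log t * (f (X t) - f xstar)) atTop = 0 ∧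
    ∃ tl : ℕ → ℝ, Tendsto tl atTop atTop ∧
      Tendsto (fun l => (tl l) ^ ((3:ℝ)/2) * Real.log (tl l) * (f (X (tl l)) - f xstar))
        atTop (nhds 0) := by
  set g : ℝ → ℝ := fun t => t ^ ((3:ℝ)/2) * Real.log t * (f (X t) - f xstar) with hg
  -- nonnegativity for t ≥ 1
  have hgnn : ∀ t : ℝ, 1 ≤ t → 0 ≤ g t := by
    intro t ht
    have h1 : (0:ℝ) ≤ t ^ ((3:ℝ)/2) := Real.rpow_nonneg (by linarith) _
    have h2 : 0 ≤ Real.log t := Real.log_nonneg ht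
    have h3 : 0 ≤ f (X t) - f xstar := by linarith [hmin (X t)]
    exact mul_nonneg (mul_nonneg h1 h2) h3
  -- key: for every ε > 0, frequently g t < ε
  have key : ∀ ε : ℝ, 0 < ε → ∃ᶠ t in atTop, g t < ε := by
    intro ε hε
    by_contra hcon
    rw [not_frequently] at hcon
    simp only [not_lt] at hcon
    obtain ⟨T, hT⟩ := eventually_atTop.mp hcon
    set T' := max T (max (t₀ + 1) 2) with hT'
    have hT'2 : (2:ℝ) ≤ T' := le_max_of_le_right (le_max_right _ _)
    have hT't₀ : t₀ + 1 ≤ T' := le_max_of_le_right (le_max_left _ _)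
    have hmono : Set.Ioi T' ⊆ Set.Ioi t₀ := fun x hx => by
      simp only [Set.mem_Ioi] at *; linarith
    have hintT' : IntegrableOn (fun t => Real.sqrt t * (f (X t) - f xstar))
        (Set.Ioi T') := hint.mono_set hmono
    -- bound: ε * (1/(t * log t)) ≤ √t (f(X t) - f*)
    have hbound : ∀ t ∈ Set.Ioi T',
        ‖ε * (1 / (t * Real.log t))‖ ≤ Real.sqrt t * (f (X t) - f xstar) := by
      intro t ht
      simp only [Set.mem_Ioi] at ht
      have ht2 : (2:ℝ) < t := lt_of_le_of_lt hT'2 ht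
      have ht0 : (0:ℝ) < t := by linarith
      have hlt : 0 < Real.log t := Real.log_pos (by linarith)
      have hge : ε ≤ g t := hT t (le_of_lt (lt_of_le_of_lt (le_max_left _ _) ht))
      have hrw : t ^ ((3:ℝ)/2) = t * Real.sqrt t := by
        have : ((3:ℝ)/2) = 1 + 1/2 := by norm_num
        rw [this, Real.rpow_add ht0, Real.rpow_one, Real.sqrt_eq_rpow]
      rw [hg] at hge
      simp only at hge
      rw [hrw] at hge
      have hs : 0 < Real.sqrt t := Real.sqrt_pos.mpr ht0
      have h1 : ‖ε * (1 / (t * Real.log t))‖ = ε / (t * Real.log t) := by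
        rw [Real.norm_eq_abs, abs_of_nonneg]
        · ring
        · positivity
      rw [h1, div_le_iff₀ (by positivity)]
      nlinarith [hge]
    have hcont : ContinuousOn (fun t => ε * (1 / (t * Real.log t))) (Set.Ioi T') := by
      apply ContinuousOn.mul continuousOn_const
      apply ContinuousOn.div continuousOn_const
      · exact continuousOn_id.mul (Real.continuousOn_log.mono (fun x hx => by
          simp only [Set.mem_Ioi] at hx
          have : (2:ℝ) < x := lt_of_le_of_lt hT'2 hx
          simp; linarith))
      · intro x hx
        simp only [Set.mem_Ioi] at hx
        have hx2 : (2:ℝ) < x := lt_of_le_of_lt hT'2 hx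
        have : 0 < Real.log x := Real.log_pos (by linarith)
        positivity
    have hkint : IntegrableOn (fun t => ε * (1 / (t * Real.log t))) (Set.Ioi T') := by
      apply Integrable.mono' hintT'
        (hcont.aestronglyMeasurable measurableSet_Ioi)
      rw [ae_restrict_iff' measurableSet_Ioi]
      filter_upwards with t ht
      exact hbound t ht
    have : IntegrableOn (fun t => 1 / (t * Real.log t)) (Set.Ioi T') := by
      have := hkint.const_mul ε⁻¹
      have heq : (fun t => ε⁻¹ * (ε * (1 / (t * Real.log t))))
          = fun t => 1 / (t * Real.log t) := by
        funext t
        field_simp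
      rwa [heq] at this
    exact not_integrable_one_div_mul_log T' hT'2 this
  constructor
  · -- liminf = 0
    rw [liminf_eq]
    have hset : {a : ℝ | ∀ᶠ t in atTop, a ≤ g t} = Set.Iic 0 := by
      ext a
      simp only [Set.mem_setOf_eq, Set.mem_Iic]
      constructor
      · intro ha
        by_contra hpos
        push_neg at hpos
        obtain ⟨t, h1, h2⟩ := (ha.and_frequently (key a hpos)).exists
        linarith
      · intro ha
        filter_upwards [eventually_ge_atTop (1:ℝ)] with t ht
        linarith [hgnn t ht]
    rw [hset, csSup_Iic]
  · -- the sequence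
    have H : ∀ l : ℕ, ∃ b, (l:ℝ) + 1 ≤ b ∧ g b < 1 / ((l:ℝ) + 1) := by
      intro l
      obtain ⟨b, hb1, hb2⟩ := frequently_atTop.mp (key (1 / ((l:ℝ) + 1)) (by positivity)) ((l:ℝ) + 1)
      exact ⟨b, hb1, hb2⟩
    choose tl htl1 htl2 using H
    refine ⟨tl, ?_, ?_⟩
    · refine tendsto_atTop_mono (fun l => ?_) tendsto_natCast_atTop_atTop
      linarith [htl1 l]
    · apply squeeze_zero (fun l => hgnn (tl l) (by have := htl1 l; have : (0:ℝ) ≤ (l:ℝ) := Nat.cast_nonneg l; linarith [htl1 l]))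
        (fun l => le_of_lt (htl2 l))
      exact tendsto_one_div_add_atTop_nhds_zero_nat
end

section
/- Let (X_k) be a nonnegative adapted process on a filtered probability space satisfying E[X_{k+1} | ℱ_k] ≤ (1 + c_k) X_k + b_k almost surely, where c_k, b_k ≥ 0 are deterministic with Σ c_k < ∞ and Σ b_k < ∞. Then X_k converges almost surely to a finite random variable (Robbins–Siegmund type result, specialized to deterministic coefficients). -/
open MeasureTheory ProbabilityTheory Filter

/-- Robbins–Siegmund with deterministic coefficients: if `X_k ≥ 0` is adapted and
integrable with `E[X_{k+1} | ℱ k] ≤ (1 + c_k) X_k + b_k` a.s., where `c_k, b_k ≥ 0`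
are deterministic and summable, then `X_k` converges almost surely to a finite limit. -/
theorem robbins_siegmund_deterministic
    {Ω : Type*} {m : MeasurableSpace Ω} {μ : Measure Ω} [IsProbabilityMeasure μ]
    (ℱ : Filtration ℕ m) (X : ℕ → Ω → ℝ)
    (hadapted : Adapted ℱ X) (hint : ∀ k, Integrable (X k) μ)
    (hnonneg : ∀ k ω, 0 ≤ X k ω)
    (b c : ℕ → ℝ) (hb : ∀ k, 0 ≤ b k) (hc : ∀ k, 0 ≤ c k)
    (hbs : Summable b) (hcs : Summable c)
    (hrec : ∀ k, ∀ᵐ ω ∂μ,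
      (μ[X (k+1) | ℱ k]) ω ≤ (1 + c k) * X k ω + b k) :
    ∀ᵐ ω ∂μ, ∃ l : ℝ, Tendsto (fun k => X k ω) atTop (nhds l) := by
  classical
  set P : ℕ → ℝ := fun k => ∏ j ∈ Finset.range k, (1 + c j) with hPdef
  have hP1 : ∀ k, 1 ≤ P k := by
    intro k
    calc (1:ℝ) = ∏ j ∈ Finset.range k, 1 := by simp
      _ ≤ P k := Finset.prod_le_prod (fun j _ => zero_le_one) (fun j _ => by linarith [hc j])
  have hPpos : ∀ k, 0 < P k := fun k => lt_of_lt_of_le one_pos (hP1 k)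
  have hPsucc : ∀ k, P (k + 1) = P k * (1 + c k) := fun k => Finset.prod_range_succ _ k
  set S : ℕ → ℝ := fun k => ∑ j ∈ Finset.range k, b j / P (j + 1) with hSdef
  have hSsucc : ∀ k, S (k + 1) = S k + b k / P (k + 1) := fun k => Finset.sum_range_succ _ k
  set C : ℝ := ∑' k, b k with hCdef
  have hSle : ∀ k, S k ≤ C := by
    intro k
    calc S k ≤ ∑ j ∈ Finset.range k, b j := by
          refine Finset.sum_le_sum fun j _ => ?_
          exact div_le_self (hb j) (hP1 _)
      _ ≤ C := Summable.sum_le_tsum _ (fun j _ => hb j) hbs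
  have hSnonneg : ∀ k, 0 ≤ S k := by
    intro k
    refine Finset.sum_nonneg fun j _ => div_nonneg (hb j) (hPpos _).le
  have hCnonneg : 0 ≤ C := le_trans (hSnonneg 0) (hSle 0)
  set Y : ℕ → Ω → ℝ := fun k ω => X k ω / P k - S k with hYdef
  have hYint : ∀ k, Integrable (Y k) μ := by
    intro k
    exact ((hint k).div_const (P k)).sub (integrable_const _)
  have hYadapted : Adapted ℱ Y := by
    intro k
    have h : Y k = fun ω => (P k)⁻¹ • X k ω - S k := by
      funext ω; simp [hYdef, smul_eq_mul, div_eq_inv_mul]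
    rw [h]
    exact ((hadapted k).const_smul ((P k)⁻¹ : ℝ)).sub measurable_const
  -- Y is a supermartingale
  have hYsuper : Supermartingale Y ℱ μ := by
    refine supermartingale_nat hYadapted.stronglyAdapted hYint fun k => ?_
    have hYeq : Y (k + 1) = (P (k + 1))⁻¹ • X (k + 1) - (fun _ => S (k + 1)) := by
      funext ω
      simp [hYdef, smul_eq_mul, div_eq_inv_mul]
    have hcond : μ[Y (k + 1)|ℱ k] =ᵐ[μ]
        fun ω => (P (k + 1))⁻¹ * (μ[X (k + 1)|ℱ k]) ω - S (k + 1) := by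
      rw [hYeq]
      refine (condExp_sub ((hint (k + 1)).smul _) (integrable_const _) (ℱ k)).trans ?_
      filter_upwards [condExp_smul (μ := μ) ((P (k + 1))⁻¹) (X (k + 1)) (m := ℱ k)] with ω h1
      simp only [Pi.sub_apply, h1, condExp_const (ℱ.le k), Pi.smul_apply, smul_eq_mul]
    filter_upwards [hcond, hrec k] with ω h1 h2
    rw [h1]
    have hck : (0:ℝ) < 1 + c k := by linarith [hc k]
    have hfrac : (1 + c k) / P (k + 1) = 1 / P k := by
      rw [hPsucc k, div_eq_div_iff (mul_pos (hPpos k) hck).ne' (hPpos k).ne']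
      ring
    have hkey : (P (k + 1))⁻¹ * (μ[X (k + 1)|ℱ k]) ω ≤
        (P (k + 1))⁻¹ * ((1 + c k) * X k ω + b k) :=
      mul_le_mul_of_nonneg_left h2 (inv_nonneg.mpr (hPpos _).le)
    have hcalc : (P (k + 1))⁻¹ * ((1 + c k) * X k ω + b k) - S (k + 1)
        = X k ω / P k - S k := by
      have h3 : (P (k + 1))⁻¹ * ((1 + c k) * X k ω) = X k ω / P k := by
        rw [show (P (k + 1))⁻¹ * ((1 + c k) * X k ω) = (1 + c k) / P (k + 1) * X k ω by ring,
          hfrac]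
        ring
      rw [hSsucc k, mul_add, h3, inv_mul_eq_div]
      ring
    have : (P (k + 1))⁻¹ * (μ[X (k + 1)|ℱ k]) ω - S (k + 1) ≤ X k ω / P k - S k := by
      rw [← hcalc]; linarith
    simpa [hYdef] using this
  -- L¹ bound
  have hYlb : ∀ k ω, -C ≤ Y k ω := by
    intro k ω
    have h1 : 0 ≤ X k ω / P k := div_nonneg (hnonneg k ω) (hPpos k).le
    have := hSle k
    simp only [hYdef]
    linarith
  have hEY : ∀ n, ∫ ω, Y n ω ∂μ ≤ ∫ ω, X 0 ω ∂μ := by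
    intro n
    have h0 : ∫ ω, Y n ω ∂μ ≤ ∫ ω, Y 0 ω ∂μ := by
      have := hYsuper.setIntegral_le (Nat.zero_le n) (MeasurableSet.univ)
      simpa [setIntegral_univ] using this
    have hY0 : ∫ ω, Y 0 ω ∂μ = ∫ ω, X 0 ω ∂μ := by
      refine integral_congr_ae (Eventually.of_forall fun ω => ?_)
      simp [hYdef, hPdef, hSdef]
    linarith [h0, hY0.le, hY0.ge]
  have hAbs : ∀ n, ∫ ω, |Y n ω| ∂μ ≤ ∫ ω, X 0 ω ∂μ + 2 * C := by
    intro n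
    have hle : ∀ ω, |Y n ω| ≤ Y n ω + 2 * C := by
      intro ω
      rcases abs_cases (Y n ω) with ⟨h, _⟩ | ⟨h, _⟩
      · rw [h]; linarith [hCnonneg]
      · rw [h]; linarith [hYlb n ω]
    calc ∫ ω, |Y n ω| ∂μ ≤ ∫ ω, (Y n ω + 2 * C) ∂μ := by
          refine integral_mono (hYint n).abs ((hYint n).add (integrable_const _)) hle
      _ = ∫ ω, Y n ω ∂μ + 2 * C := by
          rw [integral_add (hYint n) (integrable_const _)]
          simp
      _ ≤ ∫ ω, X 0 ω ∂μ + 2 * C := by linarith [hEY n]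
  set R : NNReal := (∫ ω, X 0 ω ∂μ + 2 * C).toNNReal with hRdef
  have hbdd : ∀ n, eLpNorm ((-Y) n) 1 μ ≤ (R : ENNReal) := by
    intro n
    have h1 : eLpNorm ((-Y) n) 1 μ = eLpNorm (Y n) 1 μ := by
      simp [eLpNorm_neg]
    rw [h1, eLpNorm_one_eq_lintegral_enorm,
      ← ofReal_integral_norm_eq_lintegral_enorm (hYint n)]
    have h2 : ENNReal.ofReal (∫ ω, ‖Y n ω‖ ∂μ) ≤ ENNReal.ofReal (∫ ω, X 0 ω ∂μ + 2 * C) :=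
      ENNReal.ofReal_le_ofReal (by simpa [Real.norm_eq_abs] using hAbs n)
    exact h2
  have hconv := (hYsuper.neg).exists_ae_tendsto_of_bdd hbdd
  -- limits of P and S
  have hPmono : Monotone P := by
    refine monotone_nat_of_le_succ fun k => ?_
    rw [hPsucc]
    nlinarith [hPpos k, hc k]
  have hPbdd : BddAbove (Set.range P) := by
    refine ⟨Real.exp (∑' k, c k), ?_⟩
    rintro x ⟨k, rfl⟩
    calc P k ≤ ∏ j ∈ Finset.range k, Real.exp (c j) := by
          refine Finset.prod_le_prod (fun j _ => by linarith [hc j]) fun j _ => by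
            rw [add_comm]; exact Real.add_one_le_exp (c j)
      _ = Real.exp (∑ j ∈ Finset.range k, c j) := by rw [Real.exp_sum]
      _ ≤ Real.exp (∑' k, c k) :=
          Real.exp_le_exp.mpr (Summable.sum_le_tsum _ (fun j _ => hc j) hcs)
  have hSmono : Monotone S := by
    refine monotone_nat_of_le_succ fun k => ?_
    rw [hSsucc]
    have : 0 ≤ b k / P (k + 1) := div_nonneg (hb k) (hPpos _).le
    linarith
  have hSbdd : BddAbove (Set.range S) := ⟨C, by rintro x ⟨k, rfl⟩; exact hSle k⟩
  obtain ⟨Pl, hPl⟩ : ∃ l, Tendsto P atTop (nhds l) :=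
    ⟨_, tendsto_atTop_ciSup hPmono hPbdd⟩
  obtain ⟨Sl, hSl⟩ : ∃ l, Tendsto S atTop (nhds l) :=
    ⟨_, tendsto_atTop_ciSup hSmono hSbdd⟩
  filter_upwards [hconv] with ω hω
  obtain ⟨l, hl⟩ := hω
  have hYl : Tendsto (fun n => Y n ω) atTop (nhds (-l)) := by
    have := hl.neg
    simpa using this
  refine ⟨(-l + Sl) * Pl, ?_⟩
  have hXeq : ∀ n, X n ω = (Y n ω + S n) * P n := by
    intro n
    simp only [hYdef]
    rw [sub_add_cancel, div_mul_cancel₀ _ (hPpos n).ne']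
  simp only [hXeq]
  exact (hYl.add hSl).mul hPl
end
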